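/- Let n, k, λ be integers with 2 ≤ k < n, and let D be a symmetric 2-design with parameters (n,k,λ), i.e., a family of exactly n blocks, each a k-element subset of an n-element point set {1,...,n}, such that every pair of distinct points is contained in exactly λ blocks. Then the set of blocks of D is a resolving set for the Johnson graph J(n,k). -/

import Mathlib

/-- The Johnson graph `J(n,k)`: vertices are the `k`-element subsets of `{1,...,n}`,
two vertices adjacent iff their intersection has `k-1` elements. -/
def johnsonGraph (n k : ℕ) : SimpleGraph {s : Finset (Fin n) // s.card = k} where
  Adj U W := U ≠ W ∧ (U.1 ∩ W.1).card = k - 1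
  symm := by
    constructor
    intro U W h
    exact ⟨h.1.symm, by rw [Finset.inter_comm]; exact h.2⟩
  loopless := by
    constructor
    intro U h
    exact h.1 rfl

/-- The Kneser graph `K(n,k)`: vertices are the `k`-element subsets of `{1,...,n}`,
two vertices adjacent iff the corresponding subsets are disjoint. -/
def kneserGraph (n k : ℕ) : SimpleGraph {s : Finset (Fin n) // s.card = k} where
  Adj U W := U ≠ W ∧ Disjoint U.1 W.1
  symm := by
    constructor
    intro U W h
    exact ⟨h.1.symm, h.2.symm⟩
  loopless := by
    constructor
    intro U h
    exact h.1 rfl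

/-- A set `S` of vertices is a resolving set for `G` if every pair of distinct
vertices is resolved by some vertex of `S`, i.e. is at different distances from it. -/
def resolvingSet {V : Type*} (G : SimpleGraph V) (S : Set V) : Prop :=
  ∀ u v : V, u ≠ v → ∃ x ∈ S, G.dist u x ≠ G.dist v x

/-- The metric dimension `β(G)`: the minimum cardinality of a resolving set for `G`. -/
noncomputable def metricDim {V : Type*} (G : SimpleGraph V) : ℕ :=
  sInf {m | ∃ S : Finset V, resolvingSet G ↑S ∧ S.card = m}

abbrev JV (n k : ℕ) := {s : Finset (Fin n) // s.card = k}

lemma johnson_step {n k : ℕ} (hk1 : 1 ≤ k) (U : Finset (Fin n)) {X Y : JV n k}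
    (h : (johnsonGraph n k).Adj X Y) :
    (U ∩ Y.1).card ≤ (U ∩ X.1).card + 1 := by
  have hXY : (X.1 ∩ Y.1).card = k - 1 := h.2
  have hsd : (Y.1 \ X.1).card = 1 := by
    have h1 : (Y.1 ∩ X.1).card + (Y.1 \ X.1).card = Y.1.card :=
      Finset.card_inter_add_card_sdiff _ _
    rw [Finset.inter_comm] at h1
    have := Y.2
    omega
  have hsub : U ∩ Y.1 ⊆ (U ∩ X.1) ∪ (Y.1 \ X.1) := by
    intro a ha
    simp only [Finset.mem_inter] at ha
    by_cases hx : a ∈ X.1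
    · exact Finset.mem_union_left _ (Finset.mem_inter.mpr ⟨ha.1, hx⟩)
    · exact Finset.mem_union_right _ (Finset.mem_sdiff.mpr ⟨ha.2, hx⟩)
  calc (U ∩ Y.1).card ≤ ((U ∩ X.1) ∪ (Y.1 \ X.1)).card := Finset.card_le_card hsub
    _ ≤ (U ∩ X.1).card + 1 := by
        have := Finset.card_union_le (U ∩ X.1) (Y.1 \ X.1); omega

lemma johnson_walk_lower {n k : ℕ} (hk1 : 1 ≤ k) {X W : JV n k}
    (p : (johnsonGraph n k).Walk X W) :
    k - (X.1 ∩ W.1).card ≤ p.length := by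
  induction p with
  | nil => simp [Finset.inter_self]; omega
  | @cons X Y W h q ih =>
    have hstep : (W.1 ∩ Y.1).card ≤ (W.1 ∩ X.1).card + 1 := johnson_step hk1 W.1 h
    rw [Finset.inter_comm W.1 Y.1, Finset.inter_comm W.1 X.1] at hstep
    have hle : (Y.1 ∩ W.1).card ≤ k := by
      calc _ ≤ W.1.card := Finset.card_le_card Finset.inter_subset_right
        _ = k := W.2
    simp only [SimpleGraph.Walk.length_cons]
    omega

lemma johnson_walk_upper {n k : ℕ} (hk1 : 1 ≤ k) :
    ∀ (t : ℕ) (X W : JV n k), (X.1 \ W.1).card = t →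
      ∃ p : (johnsonGraph n k).Walk X W, p.length = t := by
  intro t
  induction t with
  | zero =>
    intro X W h
    have hXW : X = W := by
      apply Subtype.ext
      apply Finset.eq_of_subset_of_card_le
        (Finset.sdiff_eq_empty_iff_subset.mp (Finset.card_eq_zero.mp h))
      rw [X.2, W.2]
    subst hXW
    exact ⟨SimpleGraph.Walk.nil, rfl⟩
  | succ t ih =>
    intro X W h
    obtain ⟨a, ha⟩ : (X.1 \ W.1).Nonempty := by
      rw [← Finset.card_pos, h]; omega
    have hWX : (W.1 \ X.1).card = t + 1 := by
      have h1 := Finset.card_inter_add_card_sdiff X.1 W.1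
      have h2 := Finset.card_inter_add_card_sdiff W.1 X.1
      rw [Finset.inter_comm] at h2
      rw [X.2] at h1; rw [W.2] at h2
      omega
    obtain ⟨b, hb⟩ : (W.1 \ X.1).Nonempty := by
      rw [← Finset.card_pos, hWX]; omega
    obtain ⟨haX, haW⟩ := Finset.mem_sdiff.mp ha
    obtain ⟨hbW, hbX⟩ := Finset.mem_sdiff.mp hb
    set Y : Finset (Fin n) := insert b (X.1.erase a) with hY
    have hbE : b ∉ X.1.erase a := fun hmem => hbX (Finset.mem_of_mem_erase hmem)
    have hYcard : Y.card = k := by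
      rw [hY, Finset.card_insert_of_notMem hbE, Finset.card_erase_of_mem haX, X.2]
      omega
    have hXY : X.1 ∩ Y = X.1.erase a := by
      ext x
      simp only [hY, Finset.mem_inter, Finset.mem_insert, Finset.mem_erase]
      constructor
      · rintro ⟨hx, (rfl | ⟨hxa, _⟩)⟩
        · exact absurd hx hbX
        · exact ⟨hxa, hx⟩
      · rintro ⟨hxa, hx⟩; exact ⟨hx, Or.inr ⟨hxa, hx⟩⟩
    have haY : a ∉ Y := by
      simp only [hY, Finset.mem_insert, Finset.mem_erase]
      rintro (rfl | ⟨hxa, _⟩)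
      · exact hbX haX
      · exact hxa rfl
    have hadj : (johnsonGraph n k).Adj X ⟨Y, hYcard⟩ := by
      constructor
      · intro hEq
        exact haY (by rw [← show X.1 = Y from congrArg Subtype.val hEq]; exact haX)
      · show (X.1 ∩ Y).card = k - 1
        rw [hXY, Finset.card_erase_of_mem haX, X.2]
    have hYW : ((⟨Y, hYcard⟩ : JV n k).1 \ W.1).card = t := by
      have hset : Y \ W.1 = (X.1 \ W.1).erase a := by
        ext x
        simp only [hY, Finset.mem_sdiff, Finset.mem_insert, Finset.mem_erase]
        constructor
        · rintro ⟨(rfl | ⟨hxa, hxX⟩), hxW⟩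
          · exact absurd hbW hxW
          · exact ⟨hxa, hxX, hxW⟩
        · rintro ⟨hxa, hxX, hxW⟩
          exact ⟨Or.inr ⟨hxa, hxX⟩, hxW⟩
      show (Y \ W.1).card = t
      rw [hset, Finset.card_erase_of_mem ha, h]; omega
    obtain ⟨q, hq⟩ := ih ⟨Y, hYcard⟩ W hYW
    exact ⟨SimpleGraph.Walk.cons hadj q, by simp [hq]⟩

lemma johnson_dist {n k : ℕ} (hk1 : 1 ≤ k) (X W : JV n k) :
    (johnsonGraph n k).dist X W = k - (X.1 ∩ W.1).card := by
  obtain ⟨p, hp⟩ := johnson_walk_upper hk1 (X.1 \ W.1).card X W rfl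
  have hXW : (X.1 \ W.1).card = k - (X.1 ∩ W.1).card := by
    have := Finset.card_inter_add_card_sdiff X.1 W.1
    rw [X.2] at this; omega
  apply le_antisymm
  · calc (johnsonGraph n k).dist X W ≤ p.length := SimpleGraph.dist_le p
      _ = k - (X.1 ∩ W.1).card := by rw [hp, hXW]
  · have hreach : (johnsonGraph n k).Reachable X W := ⟨p⟩
    obtain ⟨q, hq⟩ := hreach.exists_walk_length_eq_dist
    rw [← hq]
    exact johnson_walk_lower hk1 q

lemma card_inter_split {n : ℕ} (s t X : Finset (Fin n)) :
    (s ∩ X).card = ((s ∩ t) ∩ X).card + ((s \ t) ∩ X).card := by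
  have hu : ((s ∩ t) ∩ X) ∪ ((s \ t) ∩ X) = s ∩ X := by
    ext x
    simp only [Finset.mem_union, Finset.mem_inter, Finset.mem_sdiff]
    tauto
  have hd : Disjoint ((s ∩ t) ∩ X) ((s \ t) ∩ X) := by
    rw [Finset.disjoint_left]
    intro x hx hx'
    simp only [Finset.mem_inter, Finset.mem_sdiff] at hx hx'
    exact hx'.1.2 hx.1.2
  rw [← hu, Finset.card_union_of_disjoint hd]

theorem symmetric_design_resolving_johnson' (n k lam : ℕ) (hk : 2 ≤ k) (hkn : k < n)
    (B : Fin n → Finset (Fin n))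
    (hcard : ∀ i, (B i).card = k)
    (hpair : ∀ p q : Fin n, p ≠ q →
      (Finset.univ.filter (fun i => p ∈ B i ∧ q ∈ B i)).card = lam) :
    ∀ u v : JV n k, u ≠ v →
      ∃ x ∈ {X : JV n k | ∃ i, X.1 = B i},
        (johnsonGraph n k).dist u x ≠ (johnsonGraph n k).dist v x := by
  intro U V hUV
  by_contra hcon
  push_neg at hcon
  have hk1 : 1 ≤ k := by omega
  -- equal intersection cardinalities with every block
  have hsame : ∀ i, (U.1 ∩ B i).card = (V.1 ∩ B i).card := by
    intro i
    have hx : (⟨B i, hcard i⟩ : JV n k) ∈ {X : JV n k | ∃ i, X.1 = B i} := ⟨i, rfl⟩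
    have hd : k - (U.1 ∩ B i).card = k - (V.1 ∩ B i).card := by
      have hd0 := hcon _ hx
      rw [johnson_dist hk1, johnson_dist hk1] at hd0
      exact hd0
    have h1 : (U.1 ∩ B i).card ≤ k := by
      calc _ ≤ (B i).card := Finset.card_le_card Finset.inter_subset_right
        _ = k := hcard i
    have h2 : (V.1 ∩ B i).card ≤ k := by
      calc _ ≤ (B i).card := Finset.card_le_card Finset.inter_subset_right
        _ = k := hcard i
    omega
  have hAC : ∀ i, ((U.1 \ V.1) ∩ B i).card = ((V.1 \ U.1) ∩ B i).card := by
    intro i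
    have h1 := card_inter_split U.1 V.1 (B i)
    have h2 := card_inter_split V.1 U.1 (B i)
    rw [Finset.inter_comm V.1 U.1] at h2
    have := hsame i
    omega
  have hAne : (U.1 \ V.1).Nonempty := by
    rw [Finset.nonempty_iff_ne_empty]
    intro hemp
    apply hUV
    apply Subtype.ext
    apply Finset.eq_of_subset_of_card_le (Finset.sdiff_eq_empty_iff_subset.mp hemp)
    rw [U.2, V.2]
  obtain ⟨p, hpA⟩ := hAne
  have hpU : p ∈ U.1 := (Finset.mem_sdiff.mp hpA).1
  have hpV : p ∉ V.1 := (Finset.mem_sdiff.mp hpA).2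
  have ht1 : 1 ≤ (U.1 \ V.1).card := Finset.card_pos.mpr ⟨p, hpA⟩
  have htC : (V.1 \ U.1).card = (U.1 \ V.1).card := by
    have h1 := Finset.card_inter_add_card_sdiff U.1 V.1
    have h2 := Finset.card_inter_add_card_sdiff V.1 U.1
    rw [Finset.inter_comm] at h2
    rw [U.2] at h1; rw [V.2] at h2
    omega
  set R := Finset.univ.filter (fun i => p ∈ B i) with hR
  -- double counting
  have hdc : ∀ S : Finset (Fin n),
      ∑ i ∈ R, (S ∩ B i).card
        = ∑ q ∈ S, (Finset.univ.filter (fun i => p ∈ B i ∧ q ∈ B i)).card := by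
    intro S
    have h1 : ∀ i, (S ∩ B i).card = ∑ q ∈ S, if q ∈ B i then 1 else 0 := by
      intro i
      rw [← Finset.card_filter, Finset.filter_mem_eq_inter]
    calc ∑ i ∈ R, (S ∩ B i).card
        = ∑ i ∈ R, ∑ q ∈ S, if q ∈ B i then 1 else 0 :=
          Finset.sum_congr rfl fun i _ => h1 i
      _ = ∑ q ∈ S, ∑ i ∈ R, if q ∈ B i then 1 else 0 := Finset.sum_comm
      _ = ∑ q ∈ S, (R.filter (fun i => q ∈ B i)).card :=
          Finset.sum_congr rfl fun q _ => (Finset.card_filter _ _).symm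
      _ = ∑ q ∈ S, (Finset.univ.filter (fun i => p ∈ B i ∧ q ∈ B i)).card := by
          refine Finset.sum_congr rfl fun q _ => ?_
          rw [hR, Finset.filter_filter]
  -- sum over V \ U
  have hsum1 : ∑ i ∈ R, ((V.1 \ U.1) ∩ B i).card = (U.1 \ V.1).card * lam := by
    rw [hdc (V.1 \ U.1)]
    have hc : ∀ q ∈ V.1 \ U.1,
        (Finset.univ.filter (fun i => p ∈ B i ∧ q ∈ B i)).card = lam := by
      intro q hq
      have hqV : q ∈ V.1 := (Finset.mem_sdiff.mp hq).1
      exact hpair p q (fun h => hpV (h ▸ hqV))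
    rw [Finset.sum_congr rfl hc, Finset.sum_const, htC, smul_eq_mul]
  -- sum over U \ V
  have hsum2 : ∑ i ∈ R, ((U.1 \ V.1) ∩ B i).card
      = R.card + ((U.1 \ V.1).card - 1) * lam := by
    rw [hdc (U.1 \ V.1)]
    rw [← Finset.sum_erase_add (U.1 \ V.1) _ hpA]
    have hterm : (Finset.univ.filter (fun i => p ∈ B i ∧ p ∈ B i)).card = R.card := by
      rw [hR]
      congr 1
      apply Finset.filter_congr
      intro i _
      simp
    have hrest : ∀ q ∈ (U.1 \ V.1).erase p,
        (Finset.univ.filter (fun i => p ∈ B i ∧ q ∈ B i)).card = lam := by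
      intro q hq
      exact hpair p q (Finset.ne_of_mem_erase hq).symm
    rw [Finset.sum_congr rfl hrest, Finset.sum_const, hterm,
      Finset.card_erase_of_mem hpA, smul_eq_mul]
    omega
  have hsumeq : ∑ i ∈ R, ((U.1 \ V.1) ∩ B i).card
      = ∑ i ∈ R, ((V.1 \ U.1) ∩ B i).card :=
    Finset.sum_congr rfl fun i _ => hAC i
  have hmul : ∀ a : ℕ, 1 ≤ a → a * lam = (a - 1) * lam + lam := by
    intro a ha
    obtain ⟨s, rfl⟩ : ∃ s, a = s + 1 := ⟨a - 1, by omega⟩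
    simp [Nat.add_mul]
  have hRlam : R.card = lam := by
    rw [hsum1, hsum2] at hsumeq
    have := hmul _ ht1
    omega
  -- replication count
  have hsum3 : R.card * (k - 1) = (n - 1) * lam := by
    have hd := hdc (Finset.univ.erase p)
    have hleft : ∀ i ∈ R, ((Finset.univ.erase p) ∩ B i).card = k - 1 := by
      intro i hi
      have hpB : p ∈ B i := (Finset.mem_filter.mp hi).2
      have he : (Finset.univ.erase p) ∩ B i = (B i).erase p := by
        ext x
        simp only [Finset.mem_inter, Finset.mem_erase, Finset.mem_univ, true_and]
        tauto
      rw [he, Finset.card_erase_of_mem hpB, hcard i]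
    have hright : ∀ q ∈ Finset.univ.erase p,
        (Finset.univ.filter (fun i => p ∈ B i ∧ q ∈ B i)).card = lam := by
      intro q hq
      exact hpair p q (Finset.ne_of_mem_erase hq).symm
    rw [Finset.sum_congr rfl hleft, Finset.sum_congr rfl hright,
      Finset.sum_const, Finset.sum_const, Finset.card_erase_of_mem (Finset.mem_univ p),
      Finset.card_univ, Fintype.card_fin, smul_eq_mul, smul_eq_mul] at hd
    exact hd
  -- lam ≥ 1
  have hn0 : 0 < n := by omega
  have hlam : 0 < lam := by
    obtain ⟨x, hx, y, hy, hxy⟩ := Finset.one_lt_card.mp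
      (show 1 < (B ⟨0, hn0⟩).card by rw [hcard ⟨0, hn0⟩]; omega)
    rw [← hpair x y hxy]
    exact Finset.card_pos.mpr
      ⟨⟨0, hn0⟩, Finset.mem_filter.mpr ⟨Finset.mem_univ _, hx, hy⟩⟩
  rw [hRlam] at hsum3
  have hfin : k - 1 = n - 1 :=
    Nat.eq_of_mul_eq_mul_left hlam
      (show lam * (k - 1) = lam * (n - 1) by rw [hsum3, mul_comm])
  omega

/-- blocks form a resolving set -/
theorem symmetric_design_resolving_johnson (n k lam : ℕ) (hk : 2 ≤ k) (hkn : k < n)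
    (B : Fin n → Finset (Fin n))
    (hcard : ∀ i, (B i).card = k)
    (hpair : ∀ p q : Fin n, p ≠ q →
      (Finset.univ.filter (fun i => p ∈ B i ∧ q ∈ B i)).card = lam) :
    resolvingSet (johnsonGraph n k) {X | ∃ i, X.1 = B i} :=
  symmetric_design_resolving_johnson' n k lam hk hkn B hcard hpair
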